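/- For the functor θ¹ : A-Mod → F(A; ω) sending M to ( ᵗ⁻¹M, M; ω_{ᵗ⁻¹M}, Id_M ) and the projection pr¹ : F(A; ω) → A-Mod sending X to X¹, both (θ¹, pr¹) and (pr¹, θ⁰) are adjoint pairs. -/

import Mathlib

/-!
STATEMENT 12: For `θ¹ : A-Mod → F(A; ω)`, `M ↦ (ᵗ⁻¹M, M; ω_{ᵗ⁻¹M}, Id_M)`, and the
projection `pr¹ : F(A; ω) → A-Mod`, `X ↦ X¹`, both `(θ¹, pr¹)` and `(pr¹, θ⁰)` are
adjoint pairs.  This is expressed by the two natural bijections (each given by an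
explicit unique-existence statement):
`Hom_{F}(θ¹(M), X) ≅ Hom_A(M, X¹)` and `Hom_A(X¹, M) ≅ Hom_{F}(X, θ⁰(M))`.
-/

universe u v

/-- A module factorization `X = (X⁰, X¹; d⁰, d¹)` of `ω` over `A`: `d⁰ : X⁰ → X¹` is
`A`-linear and `d¹ : X¹ → ᵗ(X⁰)` is `A`-linear, i.e. `d¹ : X¹ → X⁰` is
`σ`-semilinear, with `d¹ ∘ d⁰ = ω_{X⁰}` and `ᵗ(d⁰) ∘ d¹ = ω_{X¹}`. -/
structure MFact (A : Type u) [Ring A] (ω : A) (σ : A ≃+* A) : Type (max u (v + 1)) where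
  X0 : ModuleCat.{v} A
  X1 : ModuleCat.{v} A
  d0 : X0 →ₗ[A] X1
  d1 : X1 →ₛₗ[(σ : A →+* A)] X0
  comp01 : ∀ x : X0, d1 (d0 x) = ω • x
  comp10 : ∀ x : X1, d0 (d1 x) = ω • x

variable {A : Type u} [Ring A] {ω : A} {σ : A ≃+* A}

/-- A morphism of module factorizations. -/
@[ext] structure MFactHom (X Y : MFact.{u, v} A ω σ) where
  f0 : X.X0 →ₗ[A] Y.X0
  f1 : X.X1 →ₗ[A] Y.X1
  comm0 : ∀ x : X.X0, f1 (X.d0 x) = Y.d0 (f0 x)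
  comm1 : ∀ x : X.X1, f0 (X.d1 x) = Y.d1 (f1 x)

/-- Composition of morphisms of module factorizations. -/
def MFactHom.comp {X Y Z : MFact.{u, v} A ω σ} (g : MFactHom Y Z) (f : MFactHom X Y) :
    MFactHom X Z where
  f0 := g.f0 ∘ₗ f.f0
  f1 := g.f1 ∘ₗ f.f1
  comm0 := fun x => by
    simp only [LinearMap.comp_apply, f.comm0 x, g.comm0 (f.f0 x)]
  comm1 := fun x => by
    simp only [LinearMap.comp_apply, f.comm1 x, g.comm1 (f.f1 x)]

variable (ω σ)

/-- The trivial module factorization `θ⁰(M) = (M, M; Id_M, ω_M)`. -/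
def theta0 (hσ : ∀ a : A, ω * a = σ a * ω)
    (M : Type v) [AddCommGroup M] [Module A M] : MFact.{u, v} A ω σ where
  X0 := ModuleCat.of A M
  X1 := ModuleCat.of A M
  d0 := LinearMap.id
  d1 :=
    { toFun := fun m => ω • m
      map_add' := fun x y => smul_add ω x y
      map_smul' := fun a m => by
        simp only [RingHom.coe_coe]
        rw [smul_smul, smul_smul, hσ] }
  comp01 := fun x => rfl
  comp10 := fun x => rfl

/-- The `τ`-twist of a module: a copy of `M`, with the `A`-action `a • m = τ a • m`. -/
@[ext] structure Tw {A : Type u} [Ring A] (τ : A →+* A) (M : Type v) : Type v where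
  /-- the element of `M` underlying an element of `Tw τ M` -/
  un : M

/-- The identity map `M → Tw τ M`. -/
def Tw.of {A : Type u} [Ring A] (τ : A →+* A) {M : Type v} (m : M) : Tw τ M := ⟨m⟩

section Tw

variable {A : Type u} [Ring A] (τ : A →+* A) (M : Type v) [AddCommGroup M] [Module A M]

/-- The canonical bijection `Tw τ M ≃ M`. -/
def Tw.equiv : Tw τ M ≃ M := ⟨Tw.un, Tw.of τ, fun _ => rfl, fun _ => rfl⟩

instance : AddCommGroup (Tw τ M) := (Tw.equiv τ M).addCommGroup

instance : SMul A (Tw τ M) := ⟨fun a m => Tw.of τ (τ a • m.un)⟩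

theorem Tw.un_add (x y : Tw τ M) : (x + y).un = x.un + y.un := rfl

theorem Tw.smul_def (a : A) (m : Tw τ M) : a • m = Tw.of τ (τ a • m.un) := rfl

instance : Module A (Tw τ M) :=
  Module.ofMinimalAxioms
    (fun a x y => by
      ext
      show τ a • (x + y).un = (τ a • x.un) + (τ a • y.un)
      rw [Tw.un_add, smul_add])
    (fun a b x => by
      ext
      show τ (a + b) • x.un = (τ a • x.un) + (τ b • x.un)
      rw [map_add, add_smul])
    (fun a b x => by
      ext
      show τ (a * b) • x.un = τ a • τ b • x.un
      rw [map_mul, mul_smul])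
    (fun x => by
      ext
      show τ 1 • x.un = x.un
      rw [map_one, one_smul])

end Tw

/-- The trivial module factorization `θ¹(M) = (ᵗ⁻¹(M), M; ω_{ᵗ⁻¹(M)}, Id_M)`. -/
def theta1 (hσ : ∀ a : A, ω * a = σ a * ω) (hreg : ∀ a : A, a * ω = 0 → a = 0)
    (M : Type v) [AddCommGroup M] [Module A M] : MFact.{u, v} A ω σ where
  X0 := ModuleCat.of A (Tw (σ.symm : A →+* A) M)
  X1 := ModuleCat.of A M
  d0 :=
    { toFun := fun m => ω • m.un
      map_add' := fun x y => by
        show ω • (x + y).un = ω • x.un + ω • y.un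
        rw [Tw.un_add, smul_add]
      map_smul' := fun a m => by
        simp only [RingHom.id_apply]
        show ω • (σ.symm a • m.un) = a • (ω • m.un)
        rw [smul_smul, smul_smul, hσ (σ.symm a), RingEquiv.apply_symm_apply] }
  d1 :=
    { toFun := fun m => Tw.of (σ.symm : A →+* A) m
      map_add' := fun x y => rfl
      map_smul' := fun a m => by
        apply Tw.ext
        show a • m = σ.symm (σ a) • m
        rw [RingEquiv.symm_apply_apply] }
  comp01 := fun x => by
    have hσω : σ.symm ω = ω := by
      have h2 : (σ ω - ω) * ω = 0 := by rw [sub_mul, ← hσ ω, sub_self]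
      have h3 : σ ω = ω := by
        have h4 := hreg _ h2
        rwa [sub_eq_zero] at h4
      rw [← h3, RingEquiv.symm_apply_apply, h3]
    apply Tw.ext
    show ω • x.un = σ.symm ω • x.un
    rw [hσω]
  comp10 := fun x => rfl

/-- The direct sum of two module factorizations. -/
def MFact.prod (X Y : MFact.{u, v} A ω σ) : MFact.{u, v} A ω σ where
  X0 := ModuleCat.of A (X.X0 × Y.X0)
  X1 := ModuleCat.of A (X.X1 × Y.X1)
  d0 := X.d0.prodMap Y.d0
  d1 :=
    { toFun := fun p => (X.d1 p.1, Y.d1 p.2)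
      map_add' := fun p q => by
        show (X.d1 (p.1 + q.1), Y.d1 (p.2 + q.2)) = _
        rw [map_add, map_add]; rfl
      map_smul' := fun a p => by
        show (X.d1 (a • p.1), Y.d1 (a • p.2)) = _
        rw [X.d1.map_smulₛₗ, Y.d1.map_smulₛₗ]; rfl }
  comp01 := fun p => by
    show (X.d1 (X.d0 p.1), Y.d1 (Y.d0 p.2)) = ω • p
    rw [X.comp01, Y.comp01]; rfl
  comp10 := fun p => by
    show (X.d0 (X.d1 p.1), Y.d0 (Y.d1 p.2)) = ω • p
    rw [X.comp10, Y.comp10]; rfl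

theorem theta1_pr1_theta0_adjunctions {A : Type u} [Ring A] (ω : A) (σ : A ≃+* A)
    (hσ : ∀ a : A, ω * a = σ a * ω)
    (hreg : ∀ a : A, a * ω = 0 → a = 0) (hreg' : ∀ a : A, ω * a = 0 → a = 0)
    (M : Type v) [AddCommGroup M] [Module A M] (X : MFact.{u, v} A ω σ) :
    -- the adjunction (θ¹, pr¹): morphisms θ¹(M) → X correspond to maps M → X¹
    (∀ g : M →ₗ[A] X.X1,
      ∃! f : MFactHom (theta1 ω σ hσ hreg M) X,
        (∀ m : M, f.f1 m = g m) ∧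
        (∀ m : Tw (σ.symm : A →+* A) M, f.f0 m = X.d1 (g m.un))) ∧
    (∀ f : MFactHom (theta1 ω σ hσ hreg M) X, ∃ g : M →ₗ[A] X.X1,
        ∀ m : M, f.f1 m = g m) ∧
    -- the adjunction (pr¹, θ⁰): maps X¹ → M correspond to morphisms X → θ⁰(M)
    (∀ g : X.X1 →ₗ[A] M,
      ∃! f : MFactHom X (theta0 ω σ hσ M),
        (∀ x : X.X1, f.f1 x = g x) ∧ (∀ x : X.X0, f.f0 x = g (X.d0 x))) ∧
    (∀ f : MFactHom X (theta0 ω σ hσ M), ∃ g : X.X1 →ₗ[A] M,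
        ∀ x : X.X1, f.f1 x = g x) := by
  refine ⟨?_, ?_, ?_, ?_⟩
  · intro g
    refine ⟨⟨{ toFun := fun m => X.d1 (g m.un)
               map_add' := fun x y => by
                 show X.d1 (g (x + y).un) = _
                 exact (congrArg X.d1 (map_add g x.un y.un)).trans (map_add X.d1 _ _)
               map_smul' := fun a m => by
                 show X.d1 (g ((σ.symm : A →+* A) a • m.un)) = a • X.d1 (g m.un)
                 rw [map_smul, X.d1.map_smulₛₗ]
                 simp },
             g, ?_, fun m => rfl⟩, ⟨fun m => rfl, fun m => rfl⟩, ?_⟩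
    · intro m
      show g (ω • m.un) = X.d0 (X.d1 (g m.un))
      rw [map_smul, X.comp10]
    · intro f hf
      ext m
      · exact hf.2 m
      · exact hf.1 m
  · intro f
    exact ⟨f.f1, fun m => rfl⟩
  · intro g
    refine ⟨⟨g ∘ₗ X.d0, g, fun x => rfl, ?_⟩, ⟨fun x => rfl, fun x => rfl⟩, ?_⟩
    · intro x
      show g (X.d0 (X.d1 x)) = ω • g x
      rw [X.comp10, map_smul]
    · intro f hf
      ext x
      · exact hf.2 x
      · exact hf.1 x
  · intro f
    exact ⟨f.f1, fun x => rfl⟩
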